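/- Let h ≥ 0 and let y ≥ 1 be real. Then Σ_{ℓ ≤ y} μ²(ℓ)/φ(ℓ)^{1+h} ≥ Σ_{q ≤ y} 1/q^{1+h}, where both sums are over positive integers up to y. -/

import Mathlib

open Finset

/-- `P(z₀)`: the product of the primes `p < z₀`. -/
noncomputable def Pz (z₀ : ℝ) : ℕ := ∏ p ∈ (range ⌈z₀⌉₊).filter Nat.Prime, p

/-- `G_d(y; z₀) = Σ_{ℓ ≤ y, gcd(ℓ, d·P(z₀)) = 1} μ²(ℓ)/φ(ℓ)`. -/
noncomputable def Gd (d : ℕ) (y z₀ : ℝ) : ℝ :=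
  ∑ ℓ ∈ (Finset.Icc 1 ⌊y⌋₊).filter (fun ℓ => Nat.gcd ℓ (d * Pz z₀) = 1),
    ((ArithmeticFunction.moebius ℓ : ℤ) : ℝ) ^ 2 / (Nat.totient ℓ : ℝ)

/-- `G(y; z₀) = G₁(y; z₀)`. -/
noncomputable def G (y z₀ : ℝ) : ℝ := Gd 1 y z₀

/-- `G(y) = Σ_{ℓ ≤ y} μ²(ℓ)/φ(ℓ)`. -/
noncomputable def G0 (y : ℝ) : ℝ :=
  ∑ ℓ ∈ Finset.Icc 1 ⌊y⌋₊,
    ((ArithmeticFunction.moebius ℓ : ℤ) : ℝ) ^ 2 / (Nat.totient ℓ : ℝ)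

section aux
open ArithmeticFunction

open ArithmeticFunction
open scoped ArithmeticFunction.zeta

/-- radical -/
def myrad (q : ℕ) : ℕ := ∏ p ∈ q.primeFactors, p

lemma myrad_squarefree (q : ℕ) : Squarefree (myrad q) := by
  have h : ∀ t : Finset ℕ, (∀ p ∈ t, p.Prime) → Squarefree (∏ p ∈ t, p) := by
    intro t
    induction t using Finset.induction_on with
    | empty => intro _; simpa using squarefree_one
    | insert _ _ ha =>
      rename_i a t iha
      intro ht
      rw [Finset.prod_insert ha]
      refine (Nat.squarefree_mul ?_).mpr ⟨(ht a (mem_insert_self a t)).squarefree,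
        iha fun p hp => ht p (mem_insert_of_mem hp)⟩
      exact Nat.Coprime.prod_right fun b hb =>
        (Nat.coprime_primes (ht a (mem_insert_self a t)) (ht b (mem_insert_of_mem hb))).mpr
          (fun hab => ha (hab ▸ hb))
  exact h _ fun p hp => Nat.prime_of_mem_primeFactors hp

lemma myrad_dvd (q : ℕ) : myrad q ∣ q := Nat.prod_primeFactors_dvd q

lemma myrad_primeFactors (q : ℕ) : (myrad q).primeFactors = q.primeFactors :=
  Nat.primeFactors_prod fun p hp => Nat.prime_of_mem_primeFactors hp

/-- the function n ↦ n^(-s) as an arithmetic function -/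
noncomputable def fs (s : ℝ) : ArithmeticFunction ℝ :=
  ⟨fun n => if n = 0 then 0 else (n : ℝ) ^ (-s), by simp⟩

lemma fs_apply (s : ℝ) {n : ℕ} (hn : n ≠ 0) : fs s n = (n : ℝ) ^ (-s) := by
  simp [fs, hn]

lemma fs_mult (s : ℝ) : (fs s).IsMultiplicative := by
  constructor
  · simp [fs]
  · intro m n hmn
    rcases eq_or_ne m 0 with rfl | hm
    · have : n = 1 := Nat.coprime_zero_left n |>.mp hmn
      subst this; simp [fs]
    rcases eq_or_ne n 0 with rfl | hn
    · have : m = 1 := Nat.coprime_zero_right m |>.mp hmn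
      subst this; simp [fs]
    rw [fs_apply _ (Nat.mul_ne_zero hm hn), fs_apply _ hm, fs_apply _ hn,
      Nat.cast_mul, Real.mul_rpow (Nat.cast_nonneg m) (Nat.cast_nonneg n)]

lemma geom_aux {r : ℝ} (h0 : 0 ≤ r) (h1 : r < 1) (n : ℕ) :
    ∑ i ∈ range n, r ^ i ≤ (1 - r)⁻¹ := by
  have h2 : (0:ℝ) < 1 - r := by linarith
  rw [geom_sum_eq (by linarith : r ≠ 1) n]
  have hpow : (0:ℝ) ≤ r ^ n := pow_nonneg h0 n
  rw [div_le_iff_of_neg (by linarith : r - 1 < 0)]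
  have hinv : (1 - r)⁻¹ * (1 - r) = 1 := inv_mul_cancel₀ h2.ne'
  nlinarith [hpow]

lemma add_rpow_aux {a b s : ℝ} (ha : 0 ≤ a) (hb : 0 ≤ b) (hs : 1 ≤ s) :
    a ^ s + b ^ s ≤ (a + b) ^ s := by
  have := NNReal.add_rpow_le_rpow_add a.toNNReal b.toNNReal hs
  have h := NNReal.coe_le_coe.mpr this
  push_cast [NNReal.coe_rpow, Real.coe_toNNReal a ha, Real.coe_toNNReal b hb] at h
  convert h using 2 <;> simp [Real.coe_toNNReal, ha, hb]

/-- core divisor-sum bound -/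
lemma sum_div_le (s : ℝ) (hs1 : 1 ≤ s) {l : ℕ} (hl : Squarefree l) (K : ℕ) :
    ∑ m ∈ (l ^ K).divisors, (m : ℝ) ^ (-s) ≤
      ∏ p ∈ l.primeFactors, (1 - (p : ℝ) ^ (-s))⁻¹ := by
  have hl0 : l ≠ 0 := hl.ne_zero
  have hstep : ∑ m ∈ (l ^ K).divisors, (m : ℝ) ^ (-s) = (fs s * ζ) (l ^ K) := by
    rw [ArithmeticFunction.coe_mul_zeta_apply]
    refine Finset.sum_congr rfl fun m hm => ?_
    exact (fs_apply s (Nat.pos_of_mem_divisors hm).ne').symm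
  rw [hstep]
  have hmul : ((fs s) * ζ).IsMultiplicative :=
    (fs_mult s).mul ArithmeticFunction.isMultiplicative_zeta.natCast
  have hprod : l ^ K = ∏ p ∈ l.primeFactors, p ^ K := by
    conv_lhs => rw [← Nat.prod_primeFactors_of_squarefree hl]
    exact (Finset.prod_pow _ _ _).symm
  rw [hprod, hmul.map_prod _ l.primeFactors ?_]
  · refine Finset.prod_le_prod (fun p hp => ?_) (fun p hp => ?_)
    · rw [ArithmeticFunction.coe_mul_zeta_apply]
      refine Finset.sum_nonneg fun m hm => ?_
      rw [fs_apply s (Nat.pos_of_mem_divisors hm).ne']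
      positivity
    · have hp' : p.Prime := Nat.prime_of_mem_primeFactors hp
      have hp1 : (1:ℝ) < (p:ℝ) := by exact_mod_cast hp'.one_lt
      have hr0 : (0:ℝ) ≤ (p:ℝ) ^ (-s) := Real.rpow_nonneg (by positivity) _
      have hr1 : (p:ℝ) ^ (-s) < 1 :=
        Real.rpow_lt_one_of_one_lt_of_neg hp1 (by linarith)
      rw [ArithmeticFunction.coe_mul_zeta_apply]
      calc ∑ m ∈ (p ^ K).divisors, (fs s) m
          = ∑ j ∈ range (K + 1), (fs s) (p ^ j) :=
            Nat.sum_divisors_prime_pow hp'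
        _ = ∑ j ∈ range (K + 1), ((p:ℝ) ^ (-s)) ^ j := by
            refine Finset.sum_congr rfl fun j hj => ?_
            rw [fs_apply s (pow_ne_zero j hp'.ne_zero), Nat.cast_pow,
              ← Real.rpow_natCast ((p:ℝ)) j, ← Real.rpow_mul (by positivity),
              mul_comm, Real.rpow_mul (by positivity), Real.rpow_natCast]
        _ ≤ (1 - (p:ℝ) ^ (-s))⁻¹ := geom_aux hr0 hr1 _
  · intro x hx y hy hxy
    exact Nat.Coprime.pow _ _ ((Nat.coprime_primes (Nat.prime_of_mem_primeFactors hx)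
      (Nat.prime_of_mem_primeFactors hy)).mpr hxy)

lemma totient_prod_primes (t : Finset ℕ) (ht : ∀ p ∈ t, p.Prime) :
    Nat.totient (∏ p ∈ t, p) = ∏ p ∈ t, (p - 1) := by
  induction t using Finset.induction_on with
  | empty => simp
  | insert _ _ ha =>
    rename_i a t iha
    rw [Finset.prod_insert ha, Finset.prod_insert ha,
      Nat.totient_mul, Nat.totient_prime (ht a (mem_insert_self a t)),
      iha fun p hp => ht p (mem_insert_of_mem hp)]
    exact Nat.Coprime.prod_right fun b hb =>
      (Nat.coprime_primes (ht a (mem_insert_self a t)) (ht b (mem_insert_of_mem hb))).mpr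
        (fun hab => ha (hab ▸ hb))

lemma per_prime (s : ℝ) (hs1 : 1 ≤ s) {p : ℕ} (hp : p.Prime) :
    (p : ℝ) ^ (-s) * (1 - (p : ℝ) ^ (-s))⁻¹ ≤ ((p : ℝ) - 1) ^ (-s) := by
  have hp2 : (2:ℝ) ≤ (p:ℝ) := by exact_mod_cast hp.two_le
  have hP : (1:ℝ) < (p:ℝ) := by linarith
  have hPs : (1:ℝ) < (p:ℝ) ^ s := Real.one_lt_rpow_iff_of_pos (by linarith) |>.mpr
    (Or.inl ⟨hP, by linarith⟩)
  have hkey : ((p:ℝ) - 1) ^ s + 1 ≤ (p:ℝ) ^ s := by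
    have := add_rpow_aux (a := (p:ℝ) - 1) (b := 1) (by linarith) zero_le_one hs1
    rw [Real.one_rpow] at this
    calc ((p:ℝ) - 1) ^ s + 1 ≤ ((p:ℝ) - 1 + 1) ^ s := this
      _ = (p:ℝ) ^ s := by ring_nf
  have hq0 : (0:ℝ) < ((p:ℝ) - 1) ^ s := Real.rpow_pos_of_pos (by linarith) s
  rw [Real.rpow_neg (by positivity), Real.rpow_neg (by linarith)]
  have hlhs : ((p:ℝ) ^ s)⁻¹ * (1 - ((p:ℝ) ^ s)⁻¹)⁻¹ = ((p:ℝ) ^ s - 1)⁻¹ := by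
    rw [← mul_inv]
    congr 1
    field_simp
  rw [hlhs]
  exact inv_anti₀ hq0 (by linarith)

/-- fiber bound -/
lemma fiber_le (s : ℝ) (hs1 : 1 ≤ s) (N : ℕ) (hN : 1 ≤ N) (l : ℕ) (hl : l ∈ Finset.Icc 1 N) :
    ∑ q ∈ (Finset.Icc 1 N).filter (fun q => myrad q = l), (q : ℝ) ^ (-s)
      ≤ ((moebius l : ℤ) : ℝ) ^ 2 / (Nat.totient l : ℝ) ^ s := by
  rcases Finset.eq_empty_or_nonempty ((Finset.Icc 1 N).filter (fun q => myrad q = l)) with he | hne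
  · rw [he, Finset.sum_empty]
    positivity
  obtain ⟨q0, hq0⟩ := hne
  rw [Finset.mem_filter] at hq0
  have hlsf : Squarefree l := hq0.2 ▸ myrad_squarefree q0
  have hl0 : 0 < l := hlsf.ne_zero.bot_lt
  have hmoeb : ((moebius l : ℤ) : ℝ) ^ 2 = 1 := by
    have := ArithmeticFunction.moebius_sq_eq_one_of_squarefree hlsf
    exact_mod_cast congrArg (fun z : ℤ => (z : ℝ)) this
  rw [hmoeb]
  have htpos : 0 < Nat.totient l := Nat.totient_pos.mpr hl0
  rw [one_div, ← Real.rpow_neg (Nat.cast_nonneg _)]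
  -- step 1: fiber ⊆ image of divisors of l^(N-1)
  have hsub : (Finset.Icc 1 N).filter (fun q => myrad q = l) ⊆
      ((l ^ (N - 1)).divisors).image (fun m => l * m) := by
    intro q hq
    rw [Finset.mem_filter, Finset.mem_Icc] at hq
    obtain ⟨⟨hq1, hqN⟩, hrad⟩ := hq
    have hq0' : q ≠ 0 := by omega
    have hlq : l ∣ q := hrad ▸ myrad_dvd q
    have hqdvd : q ∣ l ^ N := by
      rw [← Nat.factorization_le_iff_dvd hq0' (pow_ne_zero _ hlsf.ne_zero)]
      intro p
      rcases Nat.eq_zero_or_pos (q.factorization p) with h0 | hpos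
      · simp [h0]
      · have hpq : p ∈ q.primeFactors := by
          rw [← Nat.support_factorization]; exact Finsupp.mem_support_iff.mpr hpos.ne'
        have hpl : p ∈ l.primeFactors := by
          rw [← hrad, myrad_primeFactors]; exact hpq
        have h1 : 1 ≤ l.factorization p := by
          have := Nat.Prime.factorization_pos_of_dvd (Nat.prime_of_mem_primeFactors hpl)
            hlsf.ne_zero (Nat.dvd_of_mem_primeFactors hpl)
          omega
        have h2 : q.factorization p < q := Nat.factorization_lt p hq0'
        rw [Nat.factorization_pow]
        simp only [Finsupp.smul_apply, smul_eq_mul]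
        calc q.factorization p ≤ N := by omega
          _ ≤ N * l.factorization p := Nat.le_mul_of_pos_right N h1
    refine Finset.mem_image.mpr ⟨q / l, ?_, Nat.mul_div_cancel' hlq⟩
    rw [Nat.mem_divisors]
    refine ⟨?_, pow_ne_zero _ hlsf.ne_zero⟩
    have hq' : l * (q / l) = q := Nat.mul_div_cancel' hlq
    have : l * (q / l) ∣ l * l ^ (N - 1) := by
      rw [hq']
      calc q ∣ l ^ N := hqdvd
        _ = l * l ^ (N - 1) := by rw [← pow_succ']; congr 1; omega
    exact (Nat.mul_dvd_mul_iff_left hl0).mp this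
  have step1 : ∑ q ∈ (Finset.Icc 1 N).filter (fun q => myrad q = l), (q : ℝ) ^ (-s)
      ≤ ∑ m ∈ (l ^ (N - 1)).divisors, ((l * m : ℕ) : ℝ) ^ (-s) := by
    calc ∑ q ∈ (Finset.Icc 1 N).filter (fun q => myrad q = l), (q : ℝ) ^ (-s)
        ≤ ∑ q ∈ ((l ^ (N - 1)).divisors).image (fun m => l * m), (q : ℝ) ^ (-s) := by
          refine Finset.sum_le_sum_of_subset_of_nonneg hsub fun i _ _ => by positivity
      _ = ∑ m ∈ (l ^ (N - 1)).divisors, ((l * m : ℕ) : ℝ) ^ (-s) :=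
          Finset.sum_image (fun x _ y _ hxy => Nat.eq_of_mul_eq_mul_left hl0 hxy)
  have step2 : ∑ m ∈ (l ^ (N - 1)).divisors, ((l * m : ℕ) : ℝ) ^ (-s)
      = (l : ℝ) ^ (-s) * ∑ m ∈ (l ^ (N - 1)).divisors, (m : ℝ) ^ (-s) := by
    rw [Finset.mul_sum]
    refine Finset.sum_congr rfl fun m hm => ?_
    rw [Nat.cast_mul, Real.mul_rpow (Nat.cast_nonneg _) (Nat.cast_nonneg _)]
  have step3 : (l : ℝ) ^ (-s) * ∑ m ∈ (l ^ (N - 1)).divisors, (m : ℝ) ^ (-s)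
      ≤ (l : ℝ) ^ (-s) * ∏ p ∈ l.primeFactors, (1 - (p : ℝ) ^ (-s))⁻¹ := by
    refine mul_le_mul_of_nonneg_left (sum_div_le s hs1 hlsf _) (by positivity)
  have hlprod : (l : ℝ) ^ (-s) = ∏ p ∈ l.primeFactors, (p : ℝ) ^ (-s) := by
    conv_lhs => rw [← Nat.prod_primeFactors_of_squarefree hlsf]
    rw [Nat.cast_prod, ← Real.finset_prod_rpow _ _ (fun p _ => Nat.cast_nonneg p) (-s)]
  have step4 : (l : ℝ) ^ (-s) * ∏ p ∈ l.primeFactors, (1 - (p : ℝ) ^ (-s))⁻¹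
      ≤ ∏ p ∈ l.primeFactors, ((p : ℝ) - 1) ^ (-s) := by
    rw [hlprod, ← Finset.prod_mul_distrib]
    refine Finset.prod_le_prod (fun p hp => ?_) (fun p hp => ?_)
    · have hp' := Nat.prime_of_mem_primeFactors hp
      have hp1 : (1:ℝ) < (p:ℝ) := by exact_mod_cast hp'.one_lt
      have hr1 : (p:ℝ) ^ (-s) < 1 :=
        Real.rpow_lt_one_of_one_lt_of_neg hp1 (by linarith)
      have h1 : (0:ℝ) ≤ (p:ℝ) ^ (-s) := Real.rpow_nonneg (by positivity) _
      have h2 : (0:ℝ) < (1 - (p:ℝ) ^ (-s))⁻¹ := by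
        apply inv_pos.mpr; linarith
      positivity
    · exact per_prime s hs1 (Nat.prime_of_mem_primeFactors hp)
  have step5 : ∏ p ∈ l.primeFactors, ((p : ℝ) - 1) ^ (-s) = (Nat.totient l : ℝ) ^ (-s) := by
    have ht : Nat.totient l = ∏ p ∈ l.primeFactors, (p - 1) := by
      conv_lhs => rw [← Nat.prod_primeFactors_of_squarefree hlsf]
      exact totient_prod_primes _ fun p hp => Nat.prime_of_mem_primeFactors hp
    rw [ht, Nat.cast_prod]
    rw [← Real.finset_prod_rpow _ _ (fun p hp => by positivity) (-s)]
    refine Finset.prod_congr rfl fun p hp => ?_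
    have : ((p - 1 : ℕ) : ℝ) = (p : ℝ) - 1 := by
      have := (Nat.prime_of_mem_primeFactors hp).two_le
      push_cast [Nat.cast_sub (by omega : 1 ≤ p)]; ring
    rw [this]
  calc ∑ q ∈ (Finset.Icc 1 N).filter (fun q => myrad q = l), (q : ℝ) ^ (-s)
      ≤ (l : ℝ) ^ (-s) * ∑ m ∈ (l ^ (N - 1)).divisors, (m : ℝ) ^ (-s) := by
        rw [← step2]; exact step1
    _ ≤ (l : ℝ) ^ (-s) * ∏ p ∈ l.primeFactors, (1 - (p : ℝ) ^ (-s))⁻¹ := step3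
    _ ≤ ∏ p ∈ l.primeFactors, ((p : ℝ) - 1) ^ (-s) := step4
    _ = (Nat.totient l : ℝ) ^ (-s) := step5

end aux

/-- Lemma (auxvarphi): `Σ_{ℓ ≤ y} μ²(ℓ)/φ(ℓ)^{1+h} ≥ Σ_{q ≤ y} 1/q^{1+h}`. -/
theorem stmt_8 (h : ℝ) (hh : 0 ≤ h) (y : ℝ) (hy : 1 ≤ y) :
    ∑ ℓ ∈ Finset.Icc 1 ⌊y⌋₊,
        ((ArithmeticFunction.moebius ℓ : ℤ) : ℝ) ^ 2 / (Nat.totient ℓ : ℝ) ^ ((1 : ℝ) + h)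
      ≥ ∑ q ∈ Finset.Icc 1 ⌊y⌋₊, 1 / (q : ℝ) ^ ((1 : ℝ) + h) := by
  set N := ⌊y⌋₊ with hNdef
  have hN : 1 ≤ N := Nat.le_floor (by exact_mod_cast hy)
  set s : ℝ := 1 + h with hsdef
  have hs1 : 1 ≤ s := by simp [hsdef]; linarith
  rw [ge_iff_le]
  have hrw : ∑ q ∈ Finset.Icc 1 N, 1 / (q : ℝ) ^ s = ∑ q ∈ Finset.Icc 1 N, (q : ℝ) ^ (-s) := by
    refine Finset.sum_congr rfl fun q hq => ?_
    rw [one_div, ← Real.rpow_neg (Nat.cast_nonneg q)]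
  rw [hrw]
  have hmaps : ∀ q ∈ Finset.Icc 1 N, myrad q ∈ Finset.Icc 1 N := by
    intro q hq
    rw [Finset.mem_Icc] at hq ⊢
    have hd := myrad_dvd q
    exact ⟨(myrad_squarefree q).ne_zero.bot_lt, le_trans (Nat.le_of_dvd (by omega) hd) hq.2⟩
  rw [← Finset.sum_fiberwise_of_maps_to hmaps (fun q => (q : ℝ) ^ (-s))]
  exact Finset.sum_le_sum fun l hl => fiber_le s hs1 N hN l hl
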